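/- Let β_1,…,β_T ∈ (0,1), α_t := 1−β_t, ᾱ_t := ∏_{i=1}^t α_i, and fix t with 2 ≤ t ≤ T. Let φ(x; m, v) denote the density of gaussianReal m v at x; define the posterior mean μ̃_t(y, x_0) := (√ᾱ_{t−1}·β_t·x_0 + √α_t·(1−ᾱ_{t−1})·y)/(1−ᾱ_t) and the posterior variance σ_t² := ((1−ᾱ_{t−1})/(1−ᾱ_t))·β_t. Then for all x_0, x′, y ∈ ℝ the Gaussian densities factor as φ(y; √α_t·x′, β_t) · φ(x′; √ᾱ_{t−1}·x_0, 1−ᾱ_{t−1}) = φ(x′; μ̃_t(y, x_0), σ_t²) · φ(y; √ᾱ_t·x_0, 1−ᾱ_t). (This is the Bayes-rule computation showing the forward-process posterior q(x_{t−1}|x_t, x_0) of the continuous diffusion model is Gaussian with mean μ̃_t and variance σ_t² as used in the reverse process of Appendix C.) -/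

import Mathlib

set_option maxHeartbeats 1000000

open Finset

/-- The density of the real Gaussian measure `gaussianReal m v` (for `v > 0`) at `x`:
`φ(x; m, v) = (2πv)^{-1/2} · exp(-(x-m)²/(2v))`. -/
noncomputable def gaussDensity (x m v : ℝ) : ℝ :=
  (Real.sqrt (2 * Real.pi * v))⁻¹ * Real.exp (-((x - m) ^ 2) / (2 * v))

/-- Bayes-rule factorization of Gaussian densities showing that the forward-process
posterior `q(x_{t-1} | x_t, x_0)` of the continuous diffusion model is Gaussian with mean
`μ̃_t(y, x_0) = (√ᾱ_{t-1}·β_t·x_0 + √α_t·(1-ᾱ_{t-1})·y)/(1-ᾱ_t)` and variance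
`σ_t² = ((1-ᾱ_{t-1})/(1-ᾱ_t))·β_t`. -/
lemma gauss_key (a b x₀ x' y : ℝ) (ha0 : 0 < a) (ha1 : a < 1) (hb0 : 0 < b) (hb1 : b < 1) :
    gaussDensity y (Real.sqrt (1 - b) * x') b *
      gaussDensity x' (Real.sqrt a * x₀) (1 - a) =
    gaussDensity x'
        ((Real.sqrt a * b * x₀ + Real.sqrt (1 - b) * (1 - a) * y) / (1 - a * (1 - b)))
        (((1 - a) / (1 - a * (1 - b))) * b) *
      gaussDensity y (Real.sqrt (a * (1 - b)) * x₀) (1 - a * (1 - b)) := by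
  have hc : 0 < 1 - a * (1 - b) := by nlinarith
  have h1a : 0 < 1 - a := by linarith
  have hsa2 : (Real.sqrt a) ^ 2 = a := Real.sq_sqrt ha0.le
  have hsα2 : (Real.sqrt (1 - b)) ^ 2 = 1 - b := Real.sq_sqrt (by linarith)
  have hsmul : Real.sqrt (a * (1 - b)) = Real.sqrt a * Real.sqrt (1 - b) :=
    Real.sqrt_mul ha0.le _
  have hπ := Real.pi_pos
  unfold gaussDensity
  rw [hsmul]
  set sa := Real.sqrt a
  set sb := Real.sqrt (1 - b)
  -- constants
  have hconst : (Real.sqrt (2 * Real.pi * b))⁻¹ * (Real.sqrt (2 * Real.pi * (1 - a)))⁻¹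
      = (Real.sqrt (2 * Real.pi * (((1 - a) / (1 - a * (1 - b))) * b)))⁻¹ *
        (Real.sqrt (2 * Real.pi * (1 - a * (1 - b))))⁻¹ := by
    rw [← mul_inv, ← mul_inv, ← Real.sqrt_mul (by positivity), ← Real.sqrt_mul (by positivity)]
    congr 2
    field_simp
  have hexp : Real.exp (-((y - sb * x') ^ 2) / (2 * b)) *
      Real.exp (-((x' - sa * x₀) ^ 2) / (2 * (1 - a)))
      = Real.exp (-((x' - (sa * b * x₀ + sb * (1 - a) * y) / (1 - a * (1 - b))) ^ 2) /
          (2 * (((1 - a) / (1 - a * (1 - b))) * b))) *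
        Real.exp (-((y - sa * sb * x₀) ^ 2) / (2 * (1 - a * (1 - b)))) := by
    rw [← Real.exp_add, ← Real.exp_add]
    congr 1
    have hb : b = 1 - sb ^ 2 := by linarith [hsα2]
    have ha : a = sa ^ 2 := hsa2.symm
    have e1 : (1 : ℝ) - sb ^ 2 = b := by linarith
    have hbne : (1 : ℝ) - sb ^ 2 ≠ 0 := by rw [e1]; exact hb0.ne'
    have h1ane : (1 : ℝ) - sa ^ 2 ≠ 0 := by rw [hsa2]; exact h1a.ne'
    have hcne : (1 : ℝ) - sb ^ 2 * sa ^ 2 ≠ 0 := by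
      have : (1 : ℝ) - sb ^ 2 * sa ^ 2 = 1 - a * (1 - b) := by rw [hsa2, hsα2]; ring
      rw [this]; exact hc.ne'
    have hcne' : (1 : ℝ) - sa ^ 2 * sb ^ 2 ≠ 0 := by rw [mul_comm]; exact hcne
    rw [hb, ha]
    rw [show (1 : ℝ) - sa ^ 2 * (1 - (1 - sb ^ 2)) = 1 - sa ^ 2 * sb ^ 2 by ring]
    field_simp
    ring
  calc (Real.sqrt (2 * Real.pi * b))⁻¹ * Real.exp (-((y - sb * x') ^ 2) / (2 * b)) *
      ((Real.sqrt (2 * Real.pi * (1 - a)))⁻¹ * Real.exp (-((x' - sa * x₀) ^ 2) / (2 * (1 - a))))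
      = ((Real.sqrt (2 * Real.pi * b))⁻¹ * (Real.sqrt (2 * Real.pi * (1 - a)))⁻¹) *
        (Real.exp (-((y - sb * x') ^ 2) / (2 * b)) *
         Real.exp (-((x' - sa * x₀) ^ 2) / (2 * (1 - a)))) := by ring
    _ = _ := by rw [hconst, hexp]; ring

theorem gaussian_posterior_factorization
    (T : ℕ) (β : ℕ → ℝ) (hβ : ∀ t, 1 ≤ t → t ≤ T → β t ∈ Set.Ioo (0 : ℝ) 1)
    (t : ℕ) (ht2 : 2 ≤ t) (htT : t ≤ T) :
    ∀ x₀ x' y : ℝ,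
      gaussDensity y (Real.sqrt (1 - β t) * x') (β t) *
        gaussDensity x' (Real.sqrt (∏ i ∈ Finset.Icc 1 (t - 1), (1 - β i)) * x₀)
          (1 - ∏ i ∈ Finset.Icc 1 (t - 1), (1 - β i)) =
      gaussDensity x'
          ((Real.sqrt (∏ i ∈ Finset.Icc 1 (t - 1), (1 - β i)) * β t * x₀ +
              Real.sqrt (1 - β t) * (1 - ∏ i ∈ Finset.Icc 1 (t - 1), (1 - β i)) * y) /
            (1 - ∏ i ∈ Finset.Icc 1 t, (1 - β i)))
          (((1 - ∏ i ∈ Finset.Icc 1 (t - 1), (1 - β i)) /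
              (1 - ∏ i ∈ Finset.Icc 1 t, (1 - β i))) * β t) *
        gaussDensity y (Real.sqrt (∏ i ∈ Finset.Icc 1 t, (1 - β i)) * x₀)
          (1 - ∏ i ∈ Finset.Icc 1 t, (1 - β i)) := by
  intro x₀ x' y
  have ht1 : 1 ≤ t := le_trans (by norm_num) ht2
  have hfac : ∀ i ∈ Finset.Icc 1 (t - 1), (0 : ℝ) < 1 - β i ∧ (1 : ℝ) - β i < 1 := by
    intro i hi
    rw [Finset.mem_Icc] at hi
    have := hβ i hi.1 (le_trans hi.2 (le_trans (Nat.sub_le t 1) htT))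
    exact ⟨by linarith [this.1, this.2], by linarith [this.1]⟩
  have hβt := hβ t ht1 htT
  set a : ℝ := ∏ i ∈ Finset.Icc 1 (t - 1), (1 - β i) with ha
  have ha0 : 0 < a := Finset.prod_pos fun i hi => (hfac i hi).1
  have hmem : 1 ∈ Finset.Icc 1 (t - 1) := by
    rw [Finset.mem_Icc]; exact ⟨le_refl 1, Nat.le_sub_of_add_le ht2⟩
  have ha1 : a < 1 := by
    have hrest : ∏ i ∈ (Finset.Icc 1 (t - 1)).erase 1, (1 - β i) ≤ 1 :=
      Finset.prod_le_one (fun i hi => ((hfac i (Finset.mem_of_mem_erase hi)).1).le)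
        (fun i hi => ((hfac i (Finset.mem_of_mem_erase hi)).2).le)
    have hsplit := (Finset.mul_prod_erase _ (fun i => (1 - β i)) hmem).symm
    have h1 := hfac 1 hmem
    calc a = (1 - β 1) * ∏ i ∈ (Finset.Icc 1 (t - 1)).erase 1, (1 - β i) := hsplit
    _ ≤ (1 - β 1) * 1 := by
        exact mul_le_mul_of_nonneg_left hrest h1.1.le
    _ < 1 := by rw [mul_one]; exact h1.2
  have hprod : ∏ i ∈ Finset.Icc 1 t, (1 - β i) = a * (1 - β t) := by
    have : t = (t - 1) + 1 := (Nat.succ_pred_eq_of_pos (by omega)).symm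
    rw [this, Finset.prod_Icc_succ_top (by omega), ← this, ha]
  rw [hprod]
  exact gauss_key a (β t) x₀ x' y ha0 ha1 hβt.1 hβt.2
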